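/- Let $0 < d \le 1 \le u$ with $u \ne d$, and set $\tilde{k}_0(n,u,d) = \lfloor n \ln(1/d)/\ln(u/d) \rfloor$, $A(n,u,d) = (1/2)^n \sum_{k=0}^{\tilde{k}_0(n,u,d)} \binom{n}{k} u^k d^{n-k}$, $B(n,u,d) = (1/2)^{n-1} \sum_{k=\tilde{k}_0(n,u,d)+1}^{n} \binom{n}{k}$, and $G(n,u,d) = -1 + A(n,u,d) + B(n,u,d)$. Then as $n \to \infty$, $G(n,u,d)$ converges to $1$ if $ud > 1$, to $0$ if $ud = 1$, and to $-1$ if $ud < 1$. -/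

import Mathlib

open Filter Finset

lemma refl_sum (n a : ℕ) : ∑ k ∈ Finset.Ico a (n+1), (n.choose k) =
    ∑ k ∈ Finset.range (n+1-a), n.choose k := by
  rw [Finset.range_eq_Ico]
  refine Finset.sum_nbij' (fun k => n - k) (fun k => n - k) ?_ ?_ ?_ ?_ ?_
  · intro k hk; simp only [Finset.mem_Ico] at *; omega
  · intro k hk; simp only [Finset.mem_Ico] at *; omega
  · intro k hk; simp only [Finset.mem_Ico] at hk; omega
  · intro k hk; simp only [Finset.mem_Ico] at hk; omega
  · intro k hk; simp only [Finset.mem_Ico] at hk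
    exact (Nat.choose_symm (by omega)).symm

lemma choose_half_sq (n : ℕ) : (n.choose (n/2))^2 * n ≤ 4^n := by
  have key : ∀ m : ℕ, (Nat.centralBinom m)^2 * (2*m+1) ≤ 16^m := by
    intro m
    induction m with
    | zero => simp [Nat.centralBinom]
    | succ j ih =>
      have key := Nat.succ_mul_centralBinom_succ j
      have h1 : (j+1)^2 * ((Nat.centralBinom (j+1))^2 * (2*(j+1)+1)) ≤ (j+1)^2 * 16^(j+1) := by
        have h2 : ((j+1) * Nat.centralBinom (j+1))^2 * (2*j+3)
            = 4*(2*j+1)*(2*j+3) * ((Nat.centralBinom j)^2 * (2*j+1)) := by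
          rw [key]; ring
        calc (j+1)^2 * ((Nat.centralBinom (j+1))^2 * (2*(j+1)+1))
            = ((j+1) * Nat.centralBinom (j+1))^2 * (2*j+3) := by ring
          _ = 4*(2*j+1)*(2*j+3) * ((Nat.centralBinom j)^2 * (2*j+1)) := h2
          _ ≤ 4*(2*j+1)*(2*j+3) * 16^j := Nat.mul_le_mul_left _ ih
          _ ≤ (16*(j+1)^2) * 16^j := Nat.mul_le_mul_right _ (by nlinarith)
          _ = (j+1)^2 * 16^(j+1) := by rw [pow_succ]; ring
      exact Nat.le_of_mul_le_mul_left h1 (by positivity)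
  rcases Nat.even_or_odd n with ⟨m, rfl⟩ | ⟨m, rfl⟩
  · have h1 : (m+m)/2 = m := by omega
    rw [h1]
    have : (m+m).choose m = Nat.centralBinom m := by rw [Nat.centralBinom]; congr 1; omega
    rw [this]
    calc (Nat.centralBinom m)^2 * (m+m) ≤ (Nat.centralBinom m)^2 * (2*m+1) :=
          Nat.mul_le_mul_left _ (by omega)
      _ ≤ 16^m := key m
      _ ≤ 4^(m+m) := by rw [show (16:ℕ) = 4^2 by norm_num, ← pow_mul]; exact Nat.pow_le_pow_right (by norm_num) (by omega)
  · have h1 : (2*m+1)/2 = m := by omega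
    rw [h1]
    have hch : (2*m+1).choose m ≤ 2 * Nat.centralBinom m := by
      cases m with
      | zero => simp [Nat.centralBinom]
      | succ j =>
        have : (2*(j+1)+1) = (2*j+2) + 1 := by ring
        rw [this, Nat.choose_succ_succ']
        have hle1 : (2*j+2).choose j ≤ (2*j+2).choose ((2*j+2)/2) := Nat.choose_le_middle _ _
        have hle2 : (2*j+2).choose (j+1) ≤ (2*j+2).choose ((2*j+2)/2) := Nat.choose_le_middle _ _
        have h2 : (2*j+2)/2 = j+1 := by omega
        rw [h2] at hle1 hle2
        have : Nat.centralBinom (j+1) = (2*j+2).choose (j+1) := by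
          rw [show 2*j+2 = 2*(j+1) by ring]; rfl
        omega
    calc ((2*m+1).choose m)^2 * (2*m+1) ≤ (2*Nat.centralBinom m)^2 * (2*m+1) := by
          apply Nat.mul_le_mul_right; exact Nat.pow_le_pow_left hch 2
      _ = 4 * ((Nat.centralBinom m)^2 * (2*m+1)) := by ring
      _ ≤ 4 * 16^m := Nat.mul_le_mul_left _ (key m)
      _ = 4^(2*m+1) := by rw [show (16:ℕ) = 4^2 by norm_num, ← pow_mul, pow_succ]; ring

lemma sum_half_lb (n : ℕ) : 2^n ≤ 2 * ∑ k ∈ Finset.range (n/2+1), n.choose k := by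
  have hsplit : ∑ k ∈ Finset.range (n+1), n.choose k
      = (∑ k ∈ Finset.range (n/2+1), n.choose k) + ∑ k ∈ Finset.Ico (n/2+1) (n+1), n.choose k := by
    rw [Finset.range_eq_Ico, ← Finset.sum_Ico_consecutive _ (Nat.zero_le _) (by omega : n/2+1 ≤ n+1),
      ← Finset.range_eq_Ico]
  have hrefl := refl_sum n (n/2+1)
  have hsub : ∑ k ∈ Finset.range (n+1-(n/2+1)), n.choose k
      ≤ ∑ k ∈ Finset.range (n/2+1), n.choose k :=
    Finset.sum_le_sum_of_subset (Finset.range_subset_range.2 (by omega))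
  have h2n := Nat.sum_range_choose n
  omega

lemma sum_half_ub (n : ℕ) : 2 * ∑ k ∈ Finset.range (n/2+1), n.choose k
    ≤ 2^n + n.choose (n/2) := by
  have hsplit : ∑ k ∈ Finset.range (n+1), n.choose k
      = (∑ k ∈ Finset.range (n/2+1), n.choose k) + ∑ k ∈ Finset.Ico (n/2+1) (n+1), n.choose k := by
    rw [Finset.range_eq_Ico, ← Finset.sum_Ico_consecutive _ (Nat.zero_le _) (by omega : n/2+1 ≤ n+1),
      ← Finset.range_eq_Ico]
  have hrefl := refl_sum n (n/2+1)
  have h2n := Nat.sum_range_choose n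
  have hsub : ∑ k ∈ Finset.range (n/2+1), n.choose k
      ≤ (∑ k ∈ Finset.range (n+1-(n/2+1)), n.choose k) + n.choose (n/2) := by
    rcases Nat.even_or_odd n with ⟨m, rfl⟩ | ⟨m, rfl⟩
    · have h1 : (m+m)/2 = m := by omega
      have h2 : (m+m)+1-(m+1) = m := by omega
      rw [h1, h2, Finset.sum_range_succ]
    · have h1 : (2*m+1)/2 = m := by omega
      have h2 : (2*m+1)+1-(m+1) = m+1 := by omega
      rw [h1, h2]
      omega
  omega

lemma aux_tail_pow (n m : ℕ) (r : ℝ) (hr : 1 ≤ r) :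
    r^m * ∑ k ∈ Finset.Icc m n, (n.choose k : ℝ) ≤ (1+r)^n := by
  have h0 : (0:ℝ) ≤ r := by linarith
  calc r^m * ∑ k ∈ Finset.Icc m n, (n.choose k : ℝ)
      = ∑ k ∈ Finset.Icc m n, (n.choose k : ℝ) * r^m := by rw [Finset.mul_sum]; congr 1; ext; ring
    _ ≤ ∑ k ∈ Finset.Icc m n, (n.choose k : ℝ) * r^k := by
        apply Finset.sum_le_sum
        intro k hk
        have hmk : m ≤ k := (Finset.mem_Icc.1 hk).1
        exact mul_le_mul_of_nonneg_left (pow_le_pow_right₀ hr hmk) (by positivity)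
    _ ≤ ∑ k ∈ Finset.range (n+1), (n.choose k : ℝ) * r^k := by
        apply Finset.sum_le_sum_of_subset_of_nonneg
        · intro k hk; simp only [Finset.mem_Icc] at hk; simp [Finset.mem_range]; omega
        · intro k _ _; positivity
    _ = (1+r)^n := by
        rw [add_comm 1 _, add_pow]
        apply Finset.sum_congr rfl; intro k _; simp; ring

lemma aux_head_pow (n m : ℕ) (s : ℝ) (hs0 : 0 < s) (hs1 : s ≤ 1) :
    s^m * ∑ k ∈ Finset.range (m+1), (n.choose k : ℝ) ≤ (1+s)^n := by
  calc s^m * ∑ k ∈ Finset.range (m+1), (n.choose k : ℝ)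
      = ∑ k ∈ Finset.range (m+1), (n.choose k : ℝ) * s^m := by rw [Finset.mul_sum]; congr 1; ext; ring
    _ ≤ ∑ k ∈ Finset.range (m+1), (n.choose k : ℝ) * s^k := by
        apply Finset.sum_le_sum
        intro k hk
        have hkm : k ≤ m := by simp [Finset.mem_range] at hk; omega
        exact mul_le_mul_of_nonneg_left (pow_le_pow_of_le_one hs0.le hs1 hkm) (by positivity)
    _ ≤ ∑ k ∈ Finset.range (m+n+1), (n.choose k : ℝ) * s^k := by
        apply Finset.sum_le_sum_of_subset_of_nonneg
        · exact Finset.range_subset_range.2 (by omega)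
        · intro k _ _; positivity
    _ = ∑ k ∈ Finset.range (n+1), (n.choose k : ℝ) * s^k := by
        symm
        apply Finset.sum_subset (Finset.range_subset_range.2 (by omega))
        intro k _ hk
        simp only [Finset.mem_range, not_lt] at hk
        rw [Nat.choose_eq_zero_of_lt (by omega)]
        simp
    _ = (1+s)^n := by
        rw [add_comm 1 _, add_pow]
        apply Finset.sum_congr rfl; intro k _; simp; ring

lemma r_good (β : ℝ) (hβ : 1/2 < β) :
    (1 + (β + 1/2)) / 2 < (β + 1/2) ^ β := by
  set r : ℝ := β + 1/2 with hr_def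
  have hr1 : 1 < r := by rw [hr_def]; linarith
  have hr0 : 0 < r := by linarith
  have h1 : Real.log ((1+r)/2) ≤ (r-1)/2 := by
    have := Real.log_le_sub_one_of_pos (show (0:ℝ) < (1+r)/2 by linarith)
    linarith
  have h2 : 1 - 1/r ≤ Real.log r := by
    have := Real.log_le_sub_one_of_pos (show (0:ℝ) < 1/r by positivity)
    rw [Real.log_div one_ne_zero (ne_of_gt hr0), Real.log_one] at this
    linarith
  have h4 : (r-1)/2 < β * (1 - 1/r) := by
    have hr1' : (0:ℝ) < r - 1 := by linarith
    have he : β * (1 - 1/r) = (β/r) * (r-1) := by field_simp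
    have hhalf : 1/2 < β/r := by
      rw [lt_div_iff₀ hr0, hr_def]; linarith
    have := mul_lt_mul_of_pos_right hhalf hr1'
    rw [he]; linarith
  have h5 : β * (1 - 1/r) ≤ β * Real.log r :=
    mul_le_mul_of_nonneg_left h2 (by linarith)
  have h6 : Real.log ((1+r)/2) < Real.log (r ^ β) := by
    rw [Real.log_rpow hr0]
    linarith
  have := (Real.log_lt_log_iff (by linarith) (Real.rpow_pos_of_pos hr0 β)).1 h6
  exact this

lemma tendsto_tail (β : ℝ) (hβ : 1/2 < β) (m : ℕ → ℕ) (hm : ∀ n, β * n - 1 ≤ m n) :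
    Tendsto (fun n : ℕ => (1/2:ℝ)^n * ∑ k ∈ Finset.Icc (m n) n, (n.choose k : ℝ))
      atTop (nhds 0) := by
  set r : ℝ := β + 1/2 with hr_def
  have hr1 : 1 < r := by rw [hr_def]; linarith
  have hr0 : 0 < r := by linarith
  have hgood : (1 + r) / 2 < r ^ β := by rw [hr_def]; exact r_good β hβ
  have hrβ : 0 < r ^ β := Real.rpow_pos_of_pos hr0 β
  set q : ℝ := (1 + r) / (2 * r ^ β) with hq_def
  clear_value r q
  have hq0 : 0 ≤ q := by rw [hq_def]; positivity
  have hq1 : q < 1 := by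
    rw [hq_def, div_lt_one (by positivity)]
    linarith
  apply squeeze_zero (fun n => by positivity)
  · intro n
    show (1/2:ℝ)^n * ∑ k ∈ Finset.Icc (m n) n, (n.choose k : ℝ) ≤ r * q^n
    have hsum : ∑ k ∈ Finset.Icc (m n) n, (n.choose k : ℝ) ≤ (1+r)^n / r^(m n) := by
      rw [le_div_iff₀ (by positivity), mul_comm]
      exact aux_tail_pow n (m n) r hr1.le
    have hrm : r ^ (β * n - 1) ≤ r ^ (m n : ℕ) := by
      rw [← Real.rpow_natCast r (m n)]
      exact Real.rpow_le_rpow_of_exponent_le hr1.le (by linarith [hm n])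
    calc (1/2:ℝ)^n * ∑ k ∈ Finset.Icc (m n) n, (n.choose k : ℝ)
        ≤ (1/2:ℝ)^n * ((1+r)^n / r^(m n)) := by
          apply mul_le_mul_of_nonneg_left hsum (by positivity)
      _ ≤ (1/2:ℝ)^n * ((1+r)^n / r^(β * n - 1)) := by
          apply mul_le_mul_of_nonneg_left _ (by positivity)
          apply div_le_div_of_nonneg_left (by positivity) (by positivity) hrm
      _ = r * q^n := by
          rw [Real.rpow_sub hr0, Real.rpow_one, Real.rpow_mul hr0.le,
            Real.rpow_natCast, hq_def, div_pow (1+r) (2*r^β) n, mul_pow 2 (r^β) n]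
          have h2n : ((2:ℝ))^n ≠ 0 := by positivity
          have hrβn : ((r:ℝ)^β)^n ≠ 0 := by positivity
          field_simp
          ring
          rw [← mul_pow]; norm_num
  · have : Tendsto (fun n : ℕ => r * q^n) atTop (nhds (r * 0)) :=
      (tendsto_pow_atTop_nhds_zero_of_lt_one hq0 hq1).const_mul r
    simpa using this

lemma tendsto_head (α : ℝ) (hα0 : 0 ≤ α) (hα : α < 1/2) (m : ℕ → ℕ)
    (hm : ∀ n, (m n : ℝ) ≤ α * n) :
    Tendsto (fun n : ℕ => (1/2:ℝ)^n * ∑ k ∈ Finset.range (m n + 1), (n.choose k : ℝ))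
      atTop (nhds 0) := by
  set β : ℝ := 1 - α with hβ_def
  have hβ : 1/2 < β := by rw [hβ_def]; linarith
  set r : ℝ := β + 1/2 with hr_def
  have hr1 : 1 < r := by rw [hr_def]; linarith
  have hr0 : 0 < r := by linarith
  have hgood : (1 + r) / 2 < r ^ β := by rw [hr_def]; exact r_good β hβ
  have hrα : 0 < r ^ α := Real.rpow_pos_of_pos hr0 α
  set s : ℝ := 1/r with hs_def
  have hs0 : 0 < s := by positivity
  have hs1 : s ≤ 1 := by rw [hs_def]; rw [div_le_one hr0]; linarith
  set q : ℝ := (1 + s) / 2 * r ^ α with hq_def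
  clear_value β r s q
  have hq0 : 0 ≤ q := by rw [hq_def]; positivity
  have hq1 : q < 1 := by
    rw [hq_def, hs_def]
    have hkey : (1 + 1/r) / 2 * r ^ α < 1 := by
      have h2 : r ^ β * r ^ α = r := by
        rw [← Real.rpow_add hr0, hβ_def]
        simp
      have h3 : ((1+r)/2) * r ^ α < r ^ β * r ^ α :=
        mul_lt_mul_of_pos_right hgood hrα
      rw [h2] at h3
      have : (1 + 1/r)/2 * r ^ α = ((1+r)/2) * r ^ α / r := by field_simp; ring
      rw [this, div_lt_one hr0]
      exact h3
    exact hkey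
  apply squeeze_zero (fun n => by positivity)
  · intro n
    show (1/2:ℝ)^n * ∑ k ∈ Finset.range (m n + 1), (n.choose k : ℝ) ≤ q^n
    have hsum : ∑ k ∈ Finset.range (m n + 1), (n.choose k : ℝ) ≤ (1+s)^n / s^(m n) := by
      rw [le_div_iff₀ (by positivity), mul_comm]
      exact aux_head_pow n (m n) s hs0 hs1
    have hsm : (1/s)^(m n) = r^(m n) := by rw [hs_def]; rw [one_div_one_div]
    have hrm : (r:ℝ) ^ (m n : ℕ) ≤ r ^ (α * n) := by
      rw [← Real.rpow_natCast r (m n)]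
      exact Real.rpow_le_rpow_of_exponent_le hr1.le (hm n)
    calc (1/2:ℝ)^n * ∑ k ∈ Finset.range (m n + 1), (n.choose k : ℝ)
        ≤ (1/2:ℝ)^n * ((1+s)^n / s^(m n)) := by
          apply mul_le_mul_of_nonneg_left hsum (by positivity)
      _ = ((1+s)/2)^n * r^(m n) := by
          rw [← hsm]
          have hsn : (s:ℝ)^(m n) ≠ 0 := by positivity
          field_simp
          try ring
          rw [← mul_pow, ← mul_pow, mul_inv_cancel₀ hs0.ne', one_pow, one_mul]; ring
      _ ≤ ((1+s)/2)^n * r^(α * n) := by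
          apply mul_le_mul_of_nonneg_left hrm (by positivity)
      _ = q^n := by
          rw [hq_def, mul_pow, Real.rpow_mul hr0.le, Real.rpow_natCast]
  · exact tendsto_pow_atTop_nhds_zero_of_lt_one hq0 hq1
open Filter

/-- Threshold separating losing from winning numbers of heads. -/
noncomputable def ktilde (n : ℕ) (u d : ℝ) : ℕ :=
  ⌊(n : ℝ) * Real.log (1/d) / Real.log (u/d)⌋₊

/-- Contribution of the losing outcomes to the expected payout (fair coin). -/
noncomputable def A (n : ℕ) (u d : ℝ) : ℝ :=
  (1/2 : ℝ)^n * ∑ k ∈ Finset.range (ktilde n u d + 1), (n.choose k : ℝ) * u^k * d^(n-k)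

/-- Twice the probability of winning (fair coin). -/
noncomputable def B (n : ℕ) (u d : ℝ) : ℝ :=
  (1/2 : ℝ)^(n-1) * ∑ k ∈ Finset.Icc (ktilde n u d + 1) n, (n.choose k : ℝ)

/-- Expected net profit (for stake 1) after `n` rounds, fair coin. -/
noncomputable def G (n : ℕ) (u d : ℝ) : ℝ := -1 + A n u d + B n u d

set_option maxHeartbeats 1600000 in
theorem expected_net_profit_threshold (u d : ℝ)
    (hd0 : 0 < d) (hd1 : d ≤ 1) (hu : 1 ≤ u) (hne : u ≠ d) :
    (1 < u * d → Tendsto (fun n : ℕ => G n u d) atTop (nhds 1)) ∧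
    (u * d = 1 → Tendsto (fun n : ℕ => G n u d) atTop (nhds 0)) ∧
    (u * d < 1 → Tendsto (fun n : ℕ => G n u d) atTop (nhds (-1))) := by
  have hu0 : (0:ℝ) < u := by linarith
  have hdu : d < u := lt_of_le_of_ne (hd1.trans hu) (fun h => hne h.symm)
  have hx1 : 1 < u/d := (one_lt_div hd0).2 hdu
  have hx1' : 1 ≤ u/d := hx1.le
  have hL : 0 < Real.log (u/d) := Real.log_pos hx1
  have hlog1d : Real.log (1/d) = -Real.log d := by rw [one_div, Real.log_inv]
  have hld : Real.log d ≤ 0 := Real.log_nonpos hd0.le hd1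
  have hlu : 0 ≤ Real.log u := Real.log_nonneg hu
  have hLsplit : Real.log (u/d) = Real.log u - Real.log d :=
    Real.log_div (by linarith) (ne_of_gt hd0)
  set α : ℝ := Real.log (1/d) / Real.log (u/d) with hα_def
  have hα0 : 0 ≤ α := div_nonneg (by rw [hlog1d]; linarith) hL.le
  have hα1 : α ≤ 1 := by rw [hα_def, div_le_one hL, hlog1d, hLsplit]; linarith
  have hαL : α * Real.log (u/d) = -Real.log d := by
    rw [hα_def, div_mul_cancel₀ _ (ne_of_gt hL), hlog1d]
  have hk_eq : ∀ n : ℕ, ktilde n u d = ⌊(n:ℝ) * α⌋₊ := by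
    intro n; rw [ktilde, hα_def, mul_div_assoc]
  have hk_le : ∀ n : ℕ, (ktilde n u d : ℝ) ≤ α * n := by
    intro n
    rw [hk_eq n, mul_comm]
    exact Nat.floor_le (by positivity)
  have hk_lt : ∀ n : ℕ, α * n < (ktilde n u d : ℝ) + 1 := by
    intro n
    rw [hk_eq n, mul_comm]
    exact Nat.lt_floor_add_one ((n:ℝ) * α)
  have hk_n : ∀ n : ℕ, ktilde n u d ≤ n := by
    intro n
    have h1 : (ktilde n u d : ℝ) ≤ n :=
      (hk_le n).trans (mul_le_of_le_one_left (Nat.cast_nonneg n) hα1)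
    exact_mod_cast h1
  have hterm : ∀ n k : ℕ, k ≤ ktilde n u d → u^k * d^(n-k) ≤ 1 := by
    intro n k hk
    have hkn : k ≤ n := hk.trans (hk_n n)
    have hpos : (0:ℝ) < u^k * d^(n-k) := by positivity
    rw [← Real.exp_log hpos, Real.exp_le_one_iff]
    rw [Real.log_mul (by positivity) (by positivity), Real.log_pow, Real.log_pow]
    have hcast : ((n - k : ℕ) : ℝ) = (n:ℝ) - k := by
      push_cast [hkn]; ring
    rw [hcast]
    have h1 : (k:ℝ) * Real.log (u/d) ≤ α * n * Real.log (u/d) := by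
      apply mul_le_mul_of_nonneg_right _ hL.le
      calc (k:ℝ) ≤ (ktilde n u d : ℝ) := by exact_mod_cast hk
        _ ≤ α * n := hk_le n
    have h2 : α * n * Real.log (u/d) = -((n:ℝ) * Real.log d) := by
      rw [mul_comm α ((n:ℝ)), mul_assoc, hαL]; ring
    rw [h2, hLsplit] at h1
    nlinarith [h1]
  have hA0 : ∀ n, 0 ≤ A n u d := by
    intro n
    simp only [A]
    apply mul_nonneg (by positivity)
    apply Finset.sum_nonneg
    intro k _
    exact mul_nonneg (mul_nonneg (Nat.cast_nonneg _) (pow_nonneg hu0.le _)) (pow_nonneg hd0.le _)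
  have hAle : ∀ n, A n u d ≤
      (1/2:ℝ)^n * ∑ k ∈ Finset.range (ktilde n u d + 1), (n.choose k : ℝ) := by
    intro n
    simp only [A]
    apply mul_le_mul_of_nonneg_left _ (by positivity)
    apply Finset.sum_le_sum
    intro k hk
    rw [Finset.mem_range, Nat.lt_succ_iff] at hk
    have h1 := hterm n k hk
    calc (n.choose k:ℝ) * u^k * d^(n-k) = (n.choose k:ℝ) * (u^k * d^(n-k)) := by ring
      _ ≤ (n.choose k:ℝ) * 1 := mul_le_mul_of_nonneg_left h1 (Nat.cast_nonneg _)
      _ = (n.choose k:ℝ) := mul_one _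
  have hB : ∀ n : ℕ, 1 ≤ n → B n u d =
      2 - 2 * ((1/2:ℝ)^n * ∑ k ∈ Finset.range (ktilde n u d + 1), (n.choose k : ℝ)) := by
    intro n hn
    obtain ⟨m, rfl⟩ : ∃ m, n = m + 1 := ⟨n - 1, by omega⟩
    simp only [B]
    have hsplit : ∑ k ∈ Finset.range ((m+1)+1), ((m+1).choose k : ℝ)
        = (∑ k ∈ Finset.range (ktilde (m+1) u d + 1), ((m+1).choose k:ℝ))
          + ∑ k ∈ Finset.Icc (ktilde (m+1) u d + 1) (m+1), ((m+1).choose k:ℝ) := by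
      rw [← Finset.Ico_add_one_right_eq_Icc (ktilde (m+1) u d + 1) (m+1), Finset.range_eq_Ico,
        ← Finset.sum_Ico_consecutive _ (Nat.zero_le _)
          (show ktilde (m+1) u d + 1 ≤ (m+1)+1 by have := hk_n (m+1); omega),
        ← Finset.range_eq_Ico]
    have h2n : ∑ k ∈ Finset.range ((m+1)+1), ((m+1).choose k : ℝ) = 2^(m+1) := by
      have := Nat.sum_range_choose (m+1)
      exact_mod_cast congrArg (Nat.cast : ℕ → ℝ) this
    have hT : ∑ k ∈ Finset.Icc (ktilde (m+1) u d + 1) (m+1), ((m+1).choose k:ℝ)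
        = 2^(m+1) - ∑ k ∈ Finset.range (ktilde (m+1) u d + 1), ((m+1).choose k:ℝ) := by
      rw [← h2n, hsplit]; ring
    rw [hT]
    have key : ((1:ℝ)/2)^m * 2^m = 1 := by rw [← mul_pow]; norm_num
    have hm1 : (m + 1) - 1 = m := rfl
    rw [hm1]
    linear_combination (2:ℝ) * key
  refine ⟨?_, ?_, ?_⟩
  · intro h
    have hlogud : 0 < Real.log u + Real.log d := by
      rw [← Real.log_mul (by linarith) (ne_of_gt hd0)]
      exact Real.log_pos h
    have hα : α < 1/2 := by
      rw [hα_def, div_lt_iff₀ hL, hLsplit, hlog1d]; linarith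
    have hS1 : Tendsto (fun n : ℕ =>
        (1/2:ℝ)^n * ∑ k ∈ Finset.range (ktilde n u d + 1), (n.choose k : ℝ))
        atTop (nhds 0) :=
      tendsto_head α hα0 hα (fun n => ktilde n u d) hk_le
    have hA : Tendsto (fun n : ℕ => A n u d) atTop (nhds 0) :=
      squeeze_zero hA0 hAle hS1
    have hB2 : Tendsto (fun n : ℕ => B n u d) atTop (nhds 2) := by
      have h1 : Tendsto (fun n : ℕ => 2 - 2 * ((1/2:ℝ)^n *
          ∑ k ∈ Finset.range (ktilde n u d + 1), (n.choose k : ℝ))) atTop (nhds (2 - 2 * 0)) :=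
        tendsto_const_nhds.sub (hS1.const_mul 2)
      rw [show (2:ℝ) - 2 * 0 = 2 by norm_num] at h1
      apply h1.congr'
      filter_upwards [eventually_ge_atTop 1] with n hn
      exact (hB n hn).symm
    have hfin : Tendsto (fun n : ℕ => G n u d) atTop (nhds (-1 + 0 + 2)) := by
      simp only [G]
      exact (tendsto_const_nhds.add hA).add hB2
    rw [show (-1:ℝ) + 0 + 2 = 1 by norm_num] at hfin
    exact hfin
  · intro h
    have hu1 : 1 < u := by
      rcases eq_or_lt_of_le hu with he | hlt
      · exfalso
        rw [← he, one_mul] at h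
        exact hne (by rw [← he, h])
      · exact hlt
    have hd_eq : d = u⁻¹ := by
      field_simp
      linarith [h]
    have hlogd : Real.log d = -Real.log u := by rw [hd_eq, Real.log_inv]
    have hlogu_pos : 0 < Real.log u := Real.log_pos hu1
    have hα : α = 1/2 := by
      rw [hα_def, hlog1d, hLsplit, hlogd]
      field_simp
      ring
    have hk_half : ∀ n : ℕ, ktilde n u d = n / 2 := by
      intro n
      rw [hk_eq n, hα]
      rw [show (n:ℝ) * (1/2) = (n:ℝ)/2 by ring]
      rw [show ((2:ℝ)) = ((2:ℕ):ℝ) by norm_num, Nat.floor_div_natCast, Nat.floor_natCast]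
    -- central binomial decay
    have hp0 : ∀ n : ℕ, 0 ≤ (1/2:ℝ)^n * (n.choose (n/2) : ℝ) := fun n => by positivity
    have hp_sq : ∀ n : ℕ, ((1/2:ℝ)^n * (n.choose (n/2) : ℝ))^2 * n ≤ 1 := by
      intro n
      have h1 : ((n.choose (n/2) : ℝ))^2 * n ≤ 4^n := by
        exact_mod_cast choose_half_sq n
      have h2 : ((1/2:ℝ)^n * (n.choose (n/2) : ℝ))^2 * n
          = (1/4:ℝ)^n * (((n.choose (n/2) : ℝ))^2 * n) := by
        rw [mul_pow, show (((1:ℝ)/2)^n)^2 = ((1/4:ℝ))^n by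
          rw [← pow_mul, mul_comm n 2, pow_mul]; norm_num]
        ring
      rw [h2]
      calc (1/4:ℝ)^n * (((n.choose (n/2) : ℝ))^2 * n) ≤ (1/4:ℝ)^n * 4^n := by
            apply mul_le_mul_of_nonneg_left h1 (by positivity)
        _ = 1 := by rw [← mul_pow]; norm_num
    have hp_tend : Tendsto (fun n : ℕ => (1/2:ℝ)^n * (n.choose (n/2) : ℝ)) atTop (nhds 0) := by
      apply squeeze_zero' (Eventually.of_forall hp0)
      · filter_upwards [eventually_ge_atTop 1] with n hn
        have hn0 : (0:ℝ) < n := by exact_mod_cast hn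
        have h1 : ((1/2:ℝ)^n * (n.choose (n/2) : ℝ))^2 ≤ 1/n := by
          rw [le_div_iff₀ hn0]
          exact hp_sq n
        calc (1/2:ℝ)^n * (n.choose (n/2) : ℝ)
            = Real.sqrt (((1/2:ℝ)^n * (n.choose (n/2) : ℝ))^2) := (Real.sqrt_sq (hp0 n)).symm
          _ ≤ Real.sqrt (1/n) := Real.sqrt_le_sqrt h1
      · have h1 : Tendsto (fun n : ℕ => (1:ℝ)/n) atTop (nhds 0) :=
          tendsto_one_div_atTop_nhds_zero_nat
        have h2 : Tendsto (fun n : ℕ => Real.sqrt ((1:ℝ)/n)) atTop (nhds 0) := by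
          have h3 := (Real.continuous_sqrt.tendsto 0).comp h1
          simpa only [Function.comp_def, Real.sqrt_zero] using h3
        exact h2
    -- S1 bounds
    have hS1lb : ∀ n : ℕ, 1 ≤ 2 * ((1/2:ℝ)^n *
        ∑ k ∈ Finset.range (ktilde n u d + 1), (n.choose k : ℝ)) := by
      intro n
      rw [hk_half n]
      have h1 : (2:ℝ)^n ≤ 2 * ∑ k ∈ Finset.range (n/2+1), (n.choose k : ℝ) := by
        exact_mod_cast sum_half_lb n
      have h2 : (0:ℝ) < (1/2:ℝ)^n := by positivity
      calc (1:ℝ) = (1/2:ℝ)^n * 2^n := by rw [← mul_pow]; norm_num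
        _ ≤ (1/2:ℝ)^n * (2 * ∑ k ∈ Finset.range (n/2+1), (n.choose k : ℝ)) :=
            mul_le_mul_of_nonneg_left h1 h2.le
        _ = 2 * ((1/2:ℝ)^n * ∑ k ∈ Finset.range (n/2+1), (n.choose k : ℝ)) := by ring
    have hS1ub : ∀ n : ℕ, 2 * ((1/2:ℝ)^n *
        ∑ k ∈ Finset.range (ktilde n u d + 1), (n.choose k : ℝ))
        ≤ 1 + (1/2:ℝ)^n * (n.choose (n/2) : ℝ) := by
      intro n
      rw [hk_half n]
      have h1 : 2 * ∑ k ∈ Finset.range (n/2+1), (n.choose k : ℝ)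
          ≤ (2:ℝ)^n + (n.choose (n/2) : ℝ) := by
        exact_mod_cast sum_half_ub n
      have h2 : (0:ℝ) < (1/2:ℝ)^n := by positivity
      calc 2 * ((1/2:ℝ)^n * ∑ k ∈ Finset.range (n/2+1), (n.choose k : ℝ))
          = (1/2:ℝ)^n * (2 * ∑ k ∈ Finset.range (n/2+1), (n.choose k : ℝ)) := by ring
        _ ≤ (1/2:ℝ)^n * ((2:ℝ)^n + (n.choose (n/2) : ℝ)) := mul_le_mul_of_nonneg_left h1 h2.le
        _ = (1/2:ℝ)^n * 2^n + (1/2:ℝ)^n * (n.choose (n/2) : ℝ) := by ring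
        _ = 1 + (1/2:ℝ)^n * (n.choose (n/2) : ℝ) := by rw [← mul_pow]; norm_num
    have hS1 : Tendsto (fun n : ℕ =>
        (1/2:ℝ)^n * ∑ k ∈ Finset.range (ktilde n u d + 1), (n.choose k : ℝ))
        atTop (nhds (1/2)) := by
      apply tendsto_of_tendsto_of_tendsto_of_le_of_le (g := fun _ : ℕ => (1/2:ℝ))
        (h := fun n : ℕ => 1/2 + (1/2:ℝ)^n * (n.choose (n/2) : ℝ) / 2)
      · exact tendsto_const_nhds
      · have h1 : Tendsto (fun n : ℕ => (1/2:ℝ) + (1/2:ℝ)^n * (n.choose (n/2) : ℝ) / 2)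
            atTop (nhds (1/2 + 0)) := tendsto_const_nhds.add (by simpa using hp_tend.div_const 2)
        simpa using h1
      · intro n
        have := hS1lb n
        linarith
      · intro n
        have := hS1ub n
        linarith
    -- B tends to 1
    have hB1 : Tendsto (fun n : ℕ => B n u d) atTop (nhds 1) := by
      have h1 : Tendsto (fun n : ℕ => 2 - 2 * ((1/2:ℝ)^n *
          ∑ k ∈ Finset.range (ktilde n u d + 1), (n.choose k : ℝ))) atTop
          (nhds (2 - 2 * (1/2))) := tendsto_const_nhds.sub (hS1.const_mul 2)
      rw [show (2:ℝ) - 2 * (1/2) = 1 by norm_num] at h1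
      apply h1.congr'
      filter_upwards [eventually_ge_atTop 1] with n hn
      exact (hB n hn).symm
    -- A tends to 0
    have hui : u⁻¹ < 1 := by
      rw [inv_lt_one_iff₀]
      right; exact hu1
    have hw1 : (u⁻¹)^2 < 1 := by nlinarith [inv_pos.2 hu0]
    have hw0 : (0:ℝ) ≤ (u⁻¹)^2 := by positivity
    have hAle2 : ∀ n : ℕ, A n u d ≤
        ((1/2:ℝ)^n * (n.choose (n/2) : ℝ)) * (1 - (u⁻¹)^2)⁻¹ := by
      intro n
      simp only [A, hk_half n]
      have hpoint : ∀ k ∈ Finset.range (n/2 + 1),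
          (n.choose k : ℝ) * u^k * d^(n-k) ≤
          (n.choose (n/2) : ℝ) * ((u⁻¹)^2)^(n/2 - k) := by
        intro k hk
        rw [Finset.mem_range, Nat.lt_succ_iff] at hk
        have hkn : k ≤ n := le_trans hk (by omega)
        have h2k : 2*k ≤ n := by omega
        have heq : u^k * d^(n-k) = (u⁻¹)^(n - 2*k) := by
          have hu_ne : u ≠ 0 := ne_of_gt hu0
          have hsplit : u^(n-k) = u^(n-2*k) * u^k := by rw [← pow_add]; congr 1; omega
          rw [hd_eq, inv_pow, inv_pow, hsplit, mul_inv]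
          field_simp
        have hle : (u⁻¹)^(n - 2*k) ≤ ((u⁻¹)^2)^(n/2 - k) := by
          rw [← pow_mul]
          apply pow_le_pow_of_le_one (by positivity) hui.le
          omega
        have hch : (n.choose k : ℝ) ≤ (n.choose (n/2) : ℝ) := by
          exact_mod_cast Nat.choose_le_middle k n
        calc (n.choose k : ℝ) * u^k * d^(n-k) = (n.choose k : ℝ) * (u^k * d^(n-k)) := by ring
          _ = (n.choose k : ℝ) * (u⁻¹)^(n - 2*k) := by rw [heq]
          _ ≤ (n.choose (n/2) : ℝ) * ((u⁻¹)^2)^(n/2 - k) := by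
              apply mul_le_mul hch hle (by positivity) (Nat.cast_nonneg _)
      calc (1/2:ℝ)^n * ∑ k ∈ Finset.range (n/2 + 1), (n.choose k : ℝ) * u^k * d^(n-k)
          ≤ (1/2:ℝ)^n * ∑ k ∈ Finset.range (n/2 + 1),
              (n.choose (n/2) : ℝ) * ((u⁻¹)^2)^(n/2 - k) := by
            apply mul_le_mul_of_nonneg_left (Finset.sum_le_sum hpoint) (by positivity)
        _ = ((1/2:ℝ)^n * (n.choose (n/2) : ℝ)) * ∑ k ∈ Finset.range (n/2 + 1),
              ((u⁻¹)^2)^(n/2 - k) := by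
            rw [← Finset.mul_sum]
            ring
        _ = ((1/2:ℝ)^n * (n.choose (n/2) : ℝ)) * ∑ k ∈ Finset.range (n/2 + 1),
              ((u⁻¹)^2)^k := by
            congr 1
            have := Finset.sum_range_reflect (fun j => ((u⁻¹)^2)^j) (n/2 + 1)
            rw [← this]
            apply Finset.sum_congr rfl
            intro k hk
            rw [Finset.mem_range] at hk
            congr 1 <;> omega
        _ ≤ ((1/2:ℝ)^n * (n.choose (n/2) : ℝ)) * (1 - (u⁻¹)^2)⁻¹ := by
            apply mul_le_mul_of_nonneg_left _ (by positivity)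
            exact sum_le_hasSum _ (fun i _ => by positivity)
              (hasSum_geometric_of_lt_one hw0 hw1)
    have hA : Tendsto (fun n : ℕ => A n u d) atTop (nhds 0) := by
      apply squeeze_zero hA0 hAle2
      have h1 := hp_tend.mul_const ((1 - (u⁻¹)^2)⁻¹)
      simpa using h1
    have hfin : Tendsto (fun n : ℕ => G n u d) atTop (nhds (-1 + 0 + 1)) := by
      simp only [G]
      exact (tendsto_const_nhds.add hA).add hB1
    rw [show (-1:ℝ) + 0 + 1 = 0 by norm_num] at hfin
    exact hfin
  · intro h
    have hlogud : Real.log u + Real.log d < 0 := by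
      rw [← Real.log_mul (by linarith) (ne_of_gt hd0)]
      exact Real.log_neg (by positivity) h
    have hα : 1/2 < α := by
      rw [hα_def, lt_div_iff₀ hL, hLsplit, hlog1d]; linarith
    -- B tends to 0
    have htailB : Tendsto (fun n : ℕ =>
        (1/2:ℝ)^n * ∑ k ∈ Finset.Icc (ktilde n u d + 1) n, (n.choose k : ℝ))
        atTop (nhds 0) := by
      apply tendsto_tail α hα (fun n => ktilde n u d + 1)
      intro n
      have := hk_lt n
      push_cast
      linarith
    have hB0 : Tendsto (fun n : ℕ => B n u d) atTop (nhds 0) := by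
      have h1 : Tendsto (fun n : ℕ => 2 * ((1/2:ℝ)^n *
          ∑ k ∈ Finset.Icc (ktilde n u d + 1) n, (n.choose k : ℝ))) atTop (nhds (2 * 0)) :=
        htailB.const_mul 2
      rw [show (2:ℝ) * 0 = 0 by norm_num] at h1
      apply h1.congr'
      filter_upwards [eventually_ge_atTop 1] with n hn
      obtain ⟨m, rfl⟩ : ∃ m, n = m + 1 := ⟨n - 1, by omega⟩
      simp only [B]
      rw [show (m + 1) - 1 = m from rfl, pow_succ]
      ring
    -- A tends to 0
    set β' : ℝ := α/2 + 1/4 with hβ'_def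
    have hβ'1 : 1/2 < β' := by rw [hβ'_def]; linarith
    have hβ'2 : β' < α := by rw [hβ'_def]; linarith
    have hβ'0 : 0 < β' := by rw [hβ'_def]; linarith
    clear_value β'
    set M : ℕ → ℕ := fun n => ⌊β' * n⌋₊ with hM_def
    have hM_le : ∀ n : ℕ, (M n : ℝ) ≤ β' * n := fun n => Nat.floor_le (by positivity)
    have hM_ge : ∀ n : ℕ, β' * n - 1 ≤ (M n : ℝ) := by
      intro n
      have := Nat.lt_floor_add_one (β' * (n:ℝ))
      rw [hM_def]
      push_cast
      linarith
    clear_value M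
    have htailY : Tendsto (fun n : ℕ =>
        (1/2:ℝ)^n * ∑ k ∈ Finset.Icc (M n) n, (n.choose k : ℝ)) atTop (nhds 0) :=
      tendsto_tail β' hβ'1 M hM_ge
    set q1 : ℝ := Real.exp (β' * Real.log (u/d) + Real.log d) with hq1_def
    have hq10 : 0 < q1 := Real.exp_pos _
    have hq11 : q1 < 1 := by
      rw [hq1_def, Real.exp_lt_one_iff]
      have h1 : β' * Real.log (u/d) < α * Real.log (u/d) :=
        mul_lt_mul_of_pos_right hβ'2 hL
      rw [hαL] at h1
      linarith
    have hX : ∀ n : ℕ, (u/d)^(M n) * d^n ≤ q1^n := by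
      intro n
      have e1 : (u/d)^(M n) = Real.exp ((M n : ℝ) * Real.log (u/d)) := by
        rw [← Real.log_pow, Real.exp_log (pow_pos (by linarith) _)]
      have e2 : d^n = Real.exp ((n:ℝ) * Real.log d) := by
        rw [← Real.log_pow, Real.exp_log (pow_pos hd0 _)]
      have e3 : q1^n = Real.exp ((n:ℝ) * (β' * Real.log (u/d) + Real.log d)) := by
        rw [hq1_def, ← Real.exp_nat_mul]
      rw [e1, e2, e3, ← Real.exp_add, Real.exp_le_exp]
      have h1 : (M n : ℝ) * Real.log (u/d) ≤ β' * n * Real.log (u/d) :=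
        mul_le_mul_of_nonneg_right (hM_le n) hL.le
      nlinarith [h1]
    have hAX : ∀ n : ℕ, A n u d ≤ q1^n +
        (1/2:ℝ)^n * ∑ k ∈ Finset.Icc (M n) n, (n.choose k : ℝ) := by
      intro n
      simp only [A]
      have hpoint : ∀ k ∈ Finset.range (ktilde n u d + 1),
          (n.choose k : ℝ) * u^k * d^(n-k) ≤
          (n.choose k : ℝ) * ((u/d)^(M n) * d^n) +
            (if M n ≤ k then (n.choose k : ℝ) else 0) := by
        intro k hk
        rw [Finset.mem_range, Nat.lt_succ_iff] at hk
        have hkn : k ≤ n := hk.trans (hk_n n)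
        by_cases hMk : M n ≤ k
        · rw [if_pos hMk]
          have h1 := hterm n k hk
          have h2 : (n.choose k:ℝ) * u^k * d^(n-k) ≤ (n.choose k : ℝ) := by
            calc (n.choose k:ℝ) * u^k * d^(n-k) = (n.choose k:ℝ) * (u^k * d^(n-k)) := by ring
              _ ≤ (n.choose k:ℝ) * 1 := mul_le_mul_of_nonneg_left h1 (Nat.cast_nonneg _)
              _ = _ := mul_one _
          have h3 : 0 ≤ (n.choose k : ℝ) * ((u/d)^(M n) * d^n) := by positivity
          linarith
        · rw [if_neg hMk, add_zero]
          push_neg at hMk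
          have heq : u^k * d^(n-k) = (u/d)^k * d^n := by
            have hd : d^n = d^(n-k) * d^k := by
              rw [← pow_add]; congr 1; omega
            rw [div_pow, hd]
            field_simp
          have hmono : (u/d)^k ≤ (u/d)^(M n) := pow_le_pow_right₀ hx1' hMk.le
          calc (n.choose k:ℝ) * u^k * d^(n-k) = (n.choose k:ℝ) * ((u/d)^k * d^n) := by
                rw [mul_assoc, heq]
            _ ≤ (n.choose k:ℝ) * ((u/d)^(M n) * d^n) := by
                apply mul_le_mul_of_nonneg_left _ (Nat.cast_nonneg _)
                exact mul_le_mul_of_nonneg_right hmono (pow_nonneg hd0.le _)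
      calc (1/2:ℝ)^n * ∑ k ∈ Finset.range (ktilde n u d + 1), (n.choose k : ℝ) * u^k * d^(n-k)
          ≤ (1/2:ℝ)^n * ∑ k ∈ Finset.range (ktilde n u d + 1),
            ((n.choose k : ℝ) * ((u/d)^(M n) * d^n) +
              (if M n ≤ k then (n.choose k : ℝ) else 0)) := by
            apply mul_le_mul_of_nonneg_left (Finset.sum_le_sum hpoint) (by positivity)
        _ = (1/2:ℝ)^n * ∑ k ∈ Finset.range (ktilde n u d + 1),
              (n.choose k : ℝ) * ((u/d)^(M n) * d^n)
            + (1/2:ℝ)^n * ∑ k ∈ Finset.range (ktilde n u d + 1),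
              (if M n ≤ k then (n.choose k : ℝ) else 0) := by
            rw [Finset.sum_add_distrib]; ring
        _ ≤ (1/2:ℝ)^n * ∑ k ∈ Finset.range (n + 1),
              (n.choose k : ℝ) * ((u/d)^(M n) * d^n)
            + (1/2:ℝ)^n * ∑ k ∈ Finset.range (n + 1),
              (if M n ≤ k then (n.choose k : ℝ) else 0) := by
            have hsub : Finset.range (ktilde n u d + 1) ⊆ Finset.range (n + 1) :=
              Finset.range_subset_range.2 (by have := hk_n n; omega)
            apply add_le_add
            · apply mul_le_mul_of_nonneg_left _ (by positivity)
              apply Finset.sum_le_sum_of_subset_of_nonneg hsub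
              intro k _ _
              positivity
            · apply mul_le_mul_of_nonneg_left _ (by positivity)
              apply Finset.sum_le_sum_of_subset_of_nonneg hsub
              intro k _ _
              split <;> positivity
        _ = (u/d)^(M n) * d^n * ((1/2:ℝ)^n * ∑ k ∈ Finset.range (n + 1), (n.choose k : ℝ))
            + (1/2:ℝ)^n * ∑ k ∈ Finset.Icc (M n) n, (n.choose k : ℝ) := by
            congr 1
            · rw [← Finset.sum_mul]
              ring
            · congr 1
              rw [← Finset.sum_filter]
              congr 1
              ext k
              simp only [Finset.mem_filter, Finset.mem_range, Finset.mem_Icc, Nat.lt_succ_iff]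
              omega
        _ ≤ q1^n + (1/2:ℝ)^n * ∑ k ∈ Finset.Icc (M n) n, (n.choose k : ℝ) := by
            have hcs : (1/2:ℝ)^n * ∑ k ∈ Finset.range (n + 1), (n.choose k : ℝ) = 1 := by
              have := Nat.sum_range_choose n
              have h2 : ∑ k ∈ Finset.range (n + 1), (n.choose k : ℝ) = 2^n := by
                exact_mod_cast congrArg (Nat.cast : ℕ → ℝ) this
              rw [h2, ← mul_pow]; norm_num
            rw [hcs, mul_one]
            exact add_le_add_left (hX n) _
    have hq1tend : Tendsto (fun n : ℕ => q1^n +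
        (1/2:ℝ)^n * ∑ k ∈ Finset.Icc (M n) n, (n.choose k : ℝ)) atTop (nhds (0 + 0)) :=
      (tendsto_pow_atTop_nhds_zero_of_lt_one hq10.le hq11).add htailY
    rw [show (0:ℝ) + 0 = 0 by norm_num] at hq1tend
    have hA : Tendsto (fun n : ℕ => A n u d) atTop (nhds 0) :=
      squeeze_zero hA0 hAX hq1tend
    have hfin : Tendsto (fun n : ℕ => G n u d) atTop (nhds (-1 + 0 + 0)) := by
      simp only [G]
      exact (tendsto_const_nhds.add hA).add hB0
    rw [show (-1:ℝ) + 0 + 0 = -1 by norm_num] at hfin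
    exact hfin
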